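/- Let (X, 𝓑) be a tree-like ball space that is spherically complete (every nonempty chain in 𝓑 has nonempty intersection). Then (X, ci(𝓑)) is spherically complete: every nonempty chain in ci(𝓑) has nonempty intersection. -/
import Mathlib


/-- `ci 𝓑` is the collection of all nonempty intersections of nonempty
inclusion-chains of members of `𝓑`. -/
def ci {X : Type*} (B : Set (Set X)) : Set (Set X) :=
  {I | I.Nonempty ∧ ∃ C ⊆ B, C.Nonempty ∧ IsChain (· ⊆ ·) C ∧ I = ⋂₀ C}

/-- A ball space is spherically complete if every nonempty inclusion-chain of
balls has nonempty intersection. -/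
def SphericallyComplete {X : Type*} (B : Set (Set X)) : Prop :=
  ∀ C ⊆ B, C.Nonempty → IsChain (· ⊆ ·) C → (⋂₀ C).Nonempty

/-- If a tree-like ball space `(X, 𝓑)` is spherically complete, then so is `(X, ci 𝓑)`. -/
theorem sphericallyComplete_ci_of_treelike {X : Type*} [Nonempty X] (B : Set (Set X))
    (hBne : B.Nonempty) (hball : ∀ b ∈ B, b.Nonempty)
    (htree : ∀ b₁ ∈ B, ∀ b₂ ∈ B, (b₁ ∩ b₂).Nonempty → b₁ ⊆ b₂ ∨ b₂ ⊆ b₁)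
    (hsc : SphericallyComplete B) :
    SphericallyComplete (ci B) := by
  intro C hC hCne hCchain
  have h : ∀ I ∈ C, ∃ C', C' ⊆ B ∧ C'.Nonempty ∧ IsChain (· ⊆ ·) C' ∧ I = ⋂₀ C' := by
    intro I hI
    obtain ⟨_, C', h1, h2, h3, h4⟩ := hC hI
    exact ⟨C', h1, h2, h3, h4⟩
  choose f hfB hfne hfchain hfeq using h
  have hIne : ∀ I ∈ C, I.Nonempty := fun I hI => (hC hI).1
  have hIsub : ∀ (I) (hI : I ∈ C), ∀ b ∈ f I hI, I ⊆ b := by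
    intro I hI b hb
    rw [hfeq I hI]
    exact Set.sInter_subset_of_mem hb
  set D : Set (Set X) := {b | ∃ I, ∃ hI : I ∈ C, b ∈ f I hI} with hD
  have hDB : D ⊆ B := by
    rintro b ⟨I, hI, hb⟩
    exact hfB I hI hb
  have hDne : D.Nonempty := by
    obtain ⟨I, hI⟩ := hCne
    obtain ⟨b, hb⟩ := hfne I hI
    exact ⟨b, I, hI, hb⟩
  have hDchain : IsChain (· ⊆ ·) D := by
    rintro b₁ ⟨I₁, hI₁, hb₁⟩ b₂ ⟨I₂, hI₂, hb₂⟩ hne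
    have key : ∀ (J₁) (hJ₁ : J₁ ∈ C) (J₂) (hJ₂ : J₂ ∈ C) (c₁) (_ : c₁ ∈ f J₁ hJ₁)
        (c₂) (_ : c₂ ∈ f J₂ hJ₂), J₁ ⊆ J₂ → c₁ ⊆ c₂ ∨ c₂ ⊆ c₁ := by
      intro J₁ hJ₁ J₂ hJ₂ c₁ hc₁ c₂ hc₂ hsub
      apply htree c₁ (hfB J₁ hJ₁ hc₁) c₂ (hfB J₂ hJ₂ hc₂)
      obtain ⟨x, hx⟩ := hIne J₁ hJ₁
      exact ⟨x, hIsub J₁ hJ₁ c₁ hc₁ hx, hIsub J₂ hJ₂ c₂ hc₂ (hsub hx)⟩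
    rcases eq_or_ne I₁ I₂ with rfl | hI12
    · exact key I₁ hI₁ I₁ hI₂ b₁ hb₁ b₂ hb₂ subset_rfl
    · rcases hCchain hI₁ hI₂ hI12 with hs | hs
      · exact key I₁ hI₁ I₂ hI₂ b₁ hb₁ b₂ hb₂ hs
      · exact (key I₂ hI₂ I₁ hI₁ b₂ hb₂ b₁ hb₁ hs).symm
  obtain ⟨x, hx⟩ := hsc D hDB hDne hDchain
  refine ⟨x, ?_⟩
  intro I hI
  rw [hfeq I hI]
  intro b hb
  exact hx b ⟨I, hI, hb⟩
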